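/- Let m and k be natural numbers with m ≥ 1. Then in ℝ[[z]], the exponential generating function of the Whitney numbers of the first kind in the lower index satisfies ∑_{n≥0} w_m(n,k) z^n/n! = exp(−(1/m)·log(1+mz)) · (log(1+mz))^k / (m^k k!), where log(1+mz) denotes the formal power series ∑_{j≥1} (−1)^{j−1}(mz)^j/j. -/

import Mathlib

/-- Signed Stirling numbers of the first kind, defined by
`X(X−1)(X−2)⋯(X−n+1) = ∑_{i=0}^n s(n,i)·X^i`. -/
noncomputable def stirling1 (n i : ℕ) : ℝ := (descPochhammer ℝ n).coeff i

/-- Whitney numbers of the first kind: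
`w_m(n,k) = ∑_{i=0}^n (−1)^{i−k} C(i,k) m^{n−i} s(n,i)`. -/
noncomputable def whitney1 (m n k : ℕ) : ℝ :=
  ∑ i ∈ Finset.range (n + 1), (-1 : ℝ) ^ (i - k) * (i.choose k) * (m : ℝ) ^ (n - i) * stirling1 n i

/-- Formal exponential `exp(f) = ∑_k f^k/k!` of a power series, given coefficientwise;
for `f` with zero constant term, `coeff n (f^k) = 0` whenever `k > n`, so this is the
usual formal exponential. -/
noncomputable def expPS (f : PowerSeries ℝ) : PowerSeries ℝ :=
  PowerSeries.mk fun n =>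
    ∑ k ∈ Finset.range (n + 1), (PowerSeries.coeff n (f ^ k)) / k.factorial

/-- The formal power series `log(1+mz) = ∑_{j≥1} (−1)^{j−1}(mz)^j/j`. -/
noncomputable def logOneAddMZ (m : ℕ) : PowerSeries ℝ :=
  PowerSeries.mk fun j => if j = 0 then 0 else (-1 : ℝ) ^ (j - 1) * (m : ℝ) ^ j / j

open PowerSeries

lemma stirling1_eq_zero {n i : ℕ} (h : n < i) : stirling1 n i = 0 := by
  apply Polynomial.coeff_eq_zero_of_natDegree_lt
  rwa [descPochhammer_natDegree]

lemma stirling1_zero_zero : stirling1 0 0 = 1 := by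
  simp [stirling1]

lemma stirling1_succ_zero (n : ℕ) : stirling1 (n + 1) 0 = 0 := by
  simp [stirling1, descPochhammer_succ_left, Polynomial.mul_coeff_zero]

lemma stirling1_rec (n i : ℕ) :
    stirling1 (n + 1) (i + 1) = stirling1 n i - n * stirling1 n (i + 1) := by
  simp only [stirling1, descPochhammer_succ_right]
  rw [mul_sub, Polynomial.coeff_sub, Polynomial.coeff_mul_X]
  congr 1
  rw [← Polynomial.C_eq_natCast, Polynomial.coeff_mul_C]
  ring

lemma deriv_L (m : ℕ) :
    d⁄dX ℝ (logOneAddMZ m) = PowerSeries.mk (fun n => (-1 : ℝ) ^ n * (m : ℝ) ^ (n + 1)) := by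
  ext n
  rw [coeff_derivative, coeff_mk, logOneAddMZ, coeff_mk]
  simp only [Nat.succ_ne_zero, if_false, Nat.add_sub_cancel]
  have : ((n : ℝ) + 1) ≠ 0 := by positivity
  field_simp
  norm_cast

lemma one_add_mul_deriv_L (m : ℕ) :
    (1 + PowerSeries.C (m : ℝ) * X) * d⁄dX ℝ (logOneAddMZ m) = PowerSeries.C (m : ℝ) := by
  rw [deriv_L]
  ext n
  rw [add_mul, one_mul, map_add, mul_assoc, coeff_C_mul]
  cases n with
  | zero => simp
  | succ n =>
    rw [coeff_mk, mul_comm X, coeff_succ_mul_X, coeff_mk, coeff_C]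
    simp [pow_succ]
    ring

lemma coeff_X_mul_deriv (f : PowerSeries ℝ) (n : ℕ) :
    (coeff n) (X * d⁄dX ℝ f) = n * coeff n f := by
  cases n with
  | zero => simp [mul_comm X, coeff_zero_mul_X]
  | succ n => rw [mul_comm X, coeff_succ_mul_X, coeff_derivative]; push_cast; ring

lemma key (m i n : ℕ) :
    ((n : ℝ) + 1) * coeff (n + 1) ((logOneAddMZ m) ^ (i + 1))
      + (m : ℝ) * n * coeff n ((logOneAddMZ m) ^ (i + 1))
    = ((i : ℝ) + 1) * m * coeff n ((logOneAddMZ m) ^ i) := by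
  set L := logOneAddMZ m
  have hD : d⁄dX ℝ (L ^ (i + 1)) = (i + 1 : ℕ) • (L ^ i * d⁄dX ℝ L) := by
    rw [Derivation.leibniz_pow]
    simp [smul_eq_mul, Nat.add_sub_cancel]
  have h2 : (1 + PowerSeries.C (m : ℝ) * X) * d⁄dX ℝ (L ^ (i + 1))
      = (i + 1 : ℕ) • (L ^ i * PowerSeries.C (m : ℝ)) := by
    rw [hD, mul_smul_comm, ← mul_assoc, mul_comm _ (L ^ i), mul_assoc,
      one_add_mul_deriv_L]
  have h3 := congrArg (coeff n) h2
  rw [add_mul, one_mul, map_add, mul_assoc, coeff_C_mul, coeff_X_mul_deriv,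
    coeff_derivative, map_nsmul, coeff_mul_C] at h3
  push_cast [nsmul_eq_mul] at h3
  linarith [h3]

lemma coeff_L_pow (m : ℕ) (n : ℕ) :
    ∀ i, coeff n ((logOneAddMZ m) ^ i)
      = (i.factorial : ℝ) * (m : ℝ) ^ n * stirling1 n i / n.factorial := by
  induction n with
  | zero =>
    intro i
    rw [coeff_zero_eq_constantCoeff, map_pow]
    have h0 : constantCoeff (logOneAddMZ m) = 0 := by
      simp [logOneAddMZ, ← coeff_zero_eq_constantCoeff]
    rw [h0]
    cases i with
    | zero => simp [stirling1_zero_zero]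
    | succ i => simp [stirling1_eq_zero (Nat.succ_pos i), zero_pow]
  | succ n ih =>
    intro i
    cases i with
    | zero =>
      simp [coeff_one, stirling1_succ_zero]
    | succ i =>
      have hn1 : ((n : ℝ) + 1) ≠ 0 := by positivity
      have h := key m i n
      have hb : coeff (n + 1) ((logOneAddMZ m) ^ (i + 1)) =
          (((i : ℝ) + 1) * m * coeff n ((logOneAddMZ m) ^ i)
            - (m : ℝ) * n * coeff n ((logOneAddMZ m) ^ (i + 1))) / ((n : ℝ) + 1) := by
        field_simp
        linarith [h]
      rw [hb, ih i, ih (i + 1), stirling1_rec]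
      have hfn : (n.factorial : ℝ) ≠ 0 := by
        exact_mod_cast n.factorial_ne_zero
      push_cast [Nat.factorial_succ]
      field_simp
      ring

/-- The EGF of the Whitney numbers of the first kind in the lower index is
`exp(−(1/m)·log(1+mz)) · (log(1+mz))^k / (m^k k!)` in `ℝ[[z]]`. -/
theorem whitney1_egf (m k : ℕ) (hm : 1 ≤ m) :
    PowerSeries.mk (fun n => whitney1 m n k / n.factorial) =
      expPS (PowerSeries.C (-(1 / (m : ℝ))) * logOneAddMZ m) * (logOneAddMZ m) ^ k *
        PowerSeries.C (1 / ((m : ℝ) ^ k * k.factorial)) := by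
  have hm0 : (m : ℝ) ≠ 0 := Nat.cast_ne_zero.mpr (by omega)
  set L := logOneAddMZ m with hLdef
  set c : ℝ := -(1 / (m : ℝ)) with hc
  ext n
  rw [coeff_mk, coeff_mul_C]
  have hE : ∀ a : ℕ, coeff a (expPS (PowerSeries.C c * L)) =
      ∑ j ∈ Finset.range (a + 1), c ^ j / j.factorial * coeff a (L ^ j) := by
    intro a
    rw [expPS, coeff_mk]
    refine Finset.sum_congr rfl fun j _ => ?_
    rw [mul_pow, ← map_pow, coeff_C_mul]
    ring
  have hLz : ∀ {a j : ℕ}, a < j → coeff a (L ^ j) = 0 := by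
    intro a j h
    rw [hLdef, coeff_L_pow m a j, stirling1_eq_zero h]
    simp
  have step1 : (coeff n) (expPS (PowerSeries.C c * L) * L ^ k)
      = ∑ j ∈ Finset.range (n + 1), c ^ j / j.factorial * coeff n (L ^ (j + k)) := by
    rw [coeff_mul]
    have h1 : ∀ p ∈ Finset.HasAntidiagonal.antidiagonal n,
        coeff p.1 (expPS (PowerSeries.C c * L)) * coeff p.2 (L ^ k)
        = ∑ j ∈ Finset.range (n + 1),
            c ^ j / j.factorial * coeff p.1 (L ^ j) * coeff p.2 (L ^ k) := by
      intro p hp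
      rw [hE, Finset.sum_mul]
      have hp1 : p.1 ≤ n := by
        rw [Finset.HasAntidiagonal.mem_antidiagonal] at hp; omega
      apply Finset.sum_subset
      · intro x hx
        simp only [Finset.mem_range] at *
        omega
      · intro x hx hnx
        have hx2 : p.1 < x := by
          simp only [Finset.mem_range] at *
          omega
        rw [hLz hx2]
        ring
    rw [Finset.sum_congr rfl h1, Finset.sum_comm]
    refine Finset.sum_congr rfl fun j _ => ?_
    rw [pow_add, coeff_mul, Finset.mul_sum]
    refine Finset.sum_congr rfl fun p _ => ?_
    ring
  rw [step1, whitney1, Finset.sum_div, Finset.sum_mul]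
  set f : ℕ → ℝ := fun i =>
    (-1 : ℝ) ^ (i - k) * (i.choose k) * (m : ℝ) ^ (n - i) * stirling1 n i / n.factorial
    with hf
  have h1 : ∑ i ∈ Finset.range (n + 1), f i = ∑ i ∈ Finset.Ico k (n + 1), f i := by
    symm
    apply Finset.sum_subset
    · intro x hx
      simp only [Finset.mem_Ico, Finset.mem_range] at *
      omega
    · intro x hx hnx
      have : x < k := by
        simp only [Finset.mem_Ico, Finset.mem_range] at *
        omega
      rw [hf]
      simp [Nat.choose_eq_zero_of_lt this]
  have h2 : ∑ i ∈ Finset.Ico k (n + 1), f i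
      = ∑ j ∈ Finset.range (n + 1 - k), f (k + j) := by rw [Finset.sum_Ico_eq_sum_range]
  have h3 : ∑ j ∈ Finset.range (n + 1 - k), f (k + j)
      = ∑ j ∈ Finset.range (n + 1), f (k + j) := by
    apply Finset.sum_subset
    · intro x hx
      simp only [Finset.mem_range] at *
      omega
    · intro x hx hnx
      have hlt : n < k + x := by
        simp only [Finset.mem_range] at *
        omega
      rw [hf]
      simp [stirling1_eq_zero hlt]
  rw [h1, h2, h3]
  refine Finset.sum_congr rfl fun j hj => ?_
  rw [hLdef, coeff_L_pow m n (j + k)]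
  simp only [hf]
  by_cases hjk : n < j + k
  · rw [stirling1_eq_zero hjk, stirling1_eq_zero (show n < k + j by omega)]
    simp
  · push_neg at hjk
    have hsub : n - (k + j) = n - j - k := by omega
    rw [show k + j - k = j by omega,
      Nat.cast_choose ℝ (Nat.le_add_right k j), show k + j - k = j by omega,
      hsub,
      show stirling1 n (k + j) = stirling1 n (j + k) by rw [add_comm]]
    have hcj : c ^ j = (-1 : ℝ) ^ j / (m : ℝ) ^ j := by
      rw [hc, ← neg_div, div_pow]
    have hpow : (m : ℝ) ^ (n - j - k) = (m : ℝ) ^ n / ((m : ℝ) ^ j * (m : ℝ) ^ k) := by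
      rw [eq_div_iff (mul_ne_zero (pow_ne_zero _ hm0) (pow_ne_zero _ hm0)),
        ← pow_add, ← pow_add]
      congr 1
      omega
    rw [hcj, hpow]
    have hfk : ((k.factorial : ℝ)) ≠ 0 := by exact_mod_cast k.factorial_ne_zero
    have hfj : ((j.factorial : ℝ)) ≠ 0 := by exact_mod_cast j.factorial_ne_zero
    have hfn : ((n.factorial : ℝ)) ≠ 0 := by exact_mod_cast n.factorial_ne_zero
    field_simp
    ring
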